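/- In the ring R = ℤ₂[x,y]/(x², y²), the ideal J generated by the images of x and y is countable strongly annihilated: the image of xy annihilates every element of J but does not annihilate any element outside J. -/
import Mathlib


/-- An ideal `I` is countable strongly annihilated if for each countable subset `S ⊆ I`
and each `b ∉ I` there exists `c` with `c * a = 0` for all `a ∈ S` but `c * b ≠ 0`. -/
def CountableStronglyAnnihilated {R : Type*} [CommRing R] (I : Ideal R) : Prop :=
  ∀ S : Set R, S.Countable → S ⊆ I → ∀ b ∉ I, ∃ c : R, (∀ a ∈ S, c * a = 0) ∧ c * b ≠ 0

/-- The ideal `(x², y²)` of `ℤ₂[x,y]`. -/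
noncomputable def I10 : Ideal (MvPolynomial (Fin 2) (ZMod 2)) :=
  Ideal.span {MvPolynomial.X 0 ^ 2, MvPolynomial.X 1 ^ 2}

/-- The ideal `(x̄, ȳ)` of `ℤ₂[x,y]/(x², y²)`. -/
noncomputable def J10 : Ideal (MvPolynomial (Fin 2) (ZMod 2) ⧸ I10) :=
  Ideal.span {Ideal.Quotient.mk I10 (MvPolynomial.X 0),
    Ideal.Quotient.mk I10 (MvPolynomial.X 1)}

open MvPolynomial in
lemma xy_not_mem_I10 : X 0 * X 1 ∉ I10 := by
  intro h
  rw [I10, show ({X 0 ^ 2, X 1 ^ 2} : Set (MvPolynomial (Fin 2) (ZMod 2))) =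
      (fun s => monomial s (1 : ZMod 2)) ''
        {Finsupp.single 0 2, Finsupp.single 1 2} by
    simp [Set.image_insert_eq, X_pow_eq_monomial],
    mem_ideal_span_monomial_image] at h
  have hm : (Finsupp.single 0 1 + Finsupp.single 1 1 : Fin 2 →₀ ℕ) ∈
      (X 0 * X 1 : MvPolynomial (Fin 2) (ZMod 2)).support := by
    rw [X, X, monomial_mul, mul_one, support_monomial]
    simp
  obtain ⟨si, hsi, hle⟩ := h _ hm
  rcases hsi with rfl | rfl
  · have := hle 0; simp [Finsupp.single_apply] at this
  · have := hle 1; simp [Finsupp.single_apply] at this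

open MvPolynomial in
lemma xy_annih : ∀ a ∈ J10, Ideal.Quotient.mk I10 (X 0 * X 1) * a = 0 := by
  intro a ha
  rw [J10, Ideal.mem_span_pair] at ha
  obtain ⟨u, v, rfl⟩ := ha
  have h0 : Ideal.Quotient.mk I10 (X 0 * X 1) * Ideal.Quotient.mk I10 (X 0) = 0 := by
    rw [← map_mul, Ideal.Quotient.eq_zero_iff_mem]
    have : (X 0 * X 1 * X 0 : MvPolynomial (Fin 2) (ZMod 2)) = X 0 ^ 2 * X 1 := by ring
    rw [this]
    exact Ideal.mul_mem_right _ _ (Ideal.subset_span (by simp))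
  have h1 : Ideal.Quotient.mk I10 (X 0 * X 1) * Ideal.Quotient.mk I10 (X 1) = 0 := by
    rw [← map_mul, Ideal.Quotient.eq_zero_iff_mem]
    have : (X 0 * X 1 * X 1 : MvPolynomial (Fin 2) (ZMod 2)) = X 1 ^ 2 * X 0 := by ring
    rw [this]
    exact Ideal.mul_mem_right _ _ (Ideal.subset_span (by simp))
  calc Ideal.Quotient.mk I10 (X 0 * X 1) *
        (u * Ideal.Quotient.mk I10 (X 0) + v * Ideal.Quotient.mk I10 (X 1))
      = u * (Ideal.Quotient.mk I10 (X 0 * X 1) * Ideal.Quotient.mk I10 (X 0)) +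
        v * (Ideal.Quotient.mk I10 (X 0 * X 1) * Ideal.Quotient.mk I10 (X 1)) := by ring
    _ = 0 := by rw [h0, h1]; ring

open MvPolynomial in
lemma xy_nonannih : ∀ b ∉ J10, Ideal.Quotient.mk I10 (X 0 * X 1) * b ≠ 0 := by
  intro b hb
  obtain ⟨p, rfl⟩ := Ideal.Quotient.mk_surjective b
  set c := coeff 0 p with hc
  -- the "variables part" of p lies in J10
  have hq : Ideal.Quotient.mk I10 (p - C c) ∈ J10 := by
    have hmem : p - C c ∈ Ideal.span
        (MvPolynomial.X '' (Set.univ : Set (Fin 2)) :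
          Set (MvPolynomial (Fin 2) (ZMod 2))) := by
      rw [mem_ideal_span_X_image]
      intro m hm
      rw [mem_support_iff] at hm
      by_contra hcon
      push_neg at hcon
      have hm0 : m = 0 := by
        ext i
        simpa using hcon i trivial
      rw [hm0] at hm
      simp [coeff_sub, coeff_zero_C, hc] at hm
    have himg : (MvPolynomial.X '' (Set.univ : Set (Fin 2)) :
        Set (MvPolynomial (Fin 2) (ZMod 2))) = {X 0, X 1} := by
      ext q
      constructor
      · rintro ⟨i, -, rfl⟩
        fin_cases i <;> simp
      · rintro (rfl | rfl) <;> exact ⟨_, trivial, rfl⟩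
    rw [himg] at hmem
    have := Ideal.mem_map_of_mem (Ideal.Quotient.mk I10) hmem
    rwa [Ideal.map_span, Set.image_insert_eq, Set.image_singleton] at this
  -- the constant term of p is 1
  have hc1 : c = 1 := by
    rcases (by decide : ∀ z : ZMod 2, z = 0 ∨ z = 1) c with h | h
    · exfalso
      apply hb
      have : Ideal.Quotient.mk I10 p = Ideal.Quotient.mk I10 (p - C c) := by
        rw [h]; simp
      rw [this]
      exact hq
    · exact h
  have key : Ideal.Quotient.mk I10 (X 0 * X 1) * Ideal.Quotient.mk I10 p =
      Ideal.Quotient.mk I10 (X 0 * X 1) := by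
    have : Ideal.Quotient.mk I10 p =
        1 + Ideal.Quotient.mk I10 (p - C c) := by
      rw [← map_one (Ideal.Quotient.mk I10), ← map_add]
      congr 1
      rw [hc1]
      simp [C_1]
    rw [this, mul_add, xy_annih _ hq, mul_one, add_zero]
  rw [key, Ne, Ideal.Quotient.eq_zero_iff_mem]
  exact xy_not_mem_I10

/-- In `R = ℤ₂[x,y]/(x²,y²)`, the ideal `J = (x̄, ȳ)` is countable strongly
annihilated: the image of `xy` annihilates every element of `J` but does not
annihilate any element outside `J`. -/
theorem stmt10 :
    CountableStronglyAnnihilated J10 ∧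
    (∀ a ∈ J10, Ideal.Quotient.mk I10 (MvPolynomial.X 0 * MvPolynomial.X 1) * a = 0) ∧
    (∀ b ∉ J10, Ideal.Quotient.mk I10 (MvPolynomial.X 0 * MvPolynomial.X 1) * b ≠ 0) := by
  refine ⟨?_, xy_annih, xy_nonannih⟩
  intro S _ hS b hb
  exact ⟨Ideal.Quotient.mk I10 (MvPolynomial.X 0 * MvPolynomial.X 1),
    fun a ha => xy_annih a (hS ha), xy_nonannih b hb⟩
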